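/- Let f_Q be a Q-level quantizer satisfying the Lloyd–Max stationarity condition, i.e., ∫_{τ_i}^{τ_{i+1}} (m_i − τ) φ(τ) dτ = 0 for every i = 1, …, Q, and set μ = E[f_Q(g) g] and e_Q = E[(f_Q(g) − g)²]. Then σ² := E[(f_Q(g) − μ g)²] = μ − μ² = e_Q − e_Q². -/

import Mathlib

noncomputable section
open MeasureTheory ProbabilityTheory Real Set

/-- The standard Gaussian measure on `ℝ`. -/
def stdGauss : Measure ℝ := gaussianReal 0 1

instance : IsProbabilityMeasure stdGauss := by unfold stdGauss; infer_instance

/-- A `Q`-level quantizer: thresholds `-∞ = τ₁ < τ₂ < … < τ_{Q+1} = +∞` (indexed here by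
`Fin (Q+1)`, so `τ 0 = ⊥` and `τ (Fin.last Q) = ⊤`) and values `m₁, …, m_Q`, with the
step function `f` equal to `m i` on the cell `[τ i, τ (i+1))`. -/
structure Quantizer (Q : ℕ) where
  m : Fin Q → ℝ
  τ : Fin (Q + 1) → EReal
  f : ℝ → ℝ
  τ_bot : τ 0 = ⊥
  τ_top : τ (Fin.last Q) = ⊤
  τ_mono : StrictMono τ
  f_eq : ∀ (i : Fin Q) (t : ℝ), τ i.castSucc ≤ (t : EReal) → (t : EReal) < τ i.succ → f t = m i

/-- The `i`-th quantization cell `[τ_i, τ_{i+1})` (as a subset of `ℝ`). -/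
def Quantizer.cell {Q : ℕ} (q : Quantizer Q) (i : Fin Q) : Set ℝ :=
  {t : ℝ | q.τ i.castSucc ≤ (t : EReal) ∧ (t : EReal) < q.τ i.succ}

/-- The mean squared error `E[(f_Q(g) - g)²]` of a quantizer. -/
def MSE {Q : ℕ} (q : Quantizer Q) : ℝ := ∫ t, (q.f t - t) ^ 2 ∂stdGauss

/-- Lloyd–Max stationarity: `∫_{τ_i}^{τ_{i+1}} (m_i − τ) φ(τ) dτ = 0` for every cell,
written as an integral against the standard Gaussian measure. -/
def LloydMaxStationary {Q : ℕ} (q : Quantizer Q) : Prop :=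
  ∀ i : Fin Q, ∫ t in q.cell i, (q.m i - t) ∂stdGauss = 0

/-! ### Auxiliary lemmas -/

section Aux

lemma phi_eq (x : ℝ) :
    gaussianPDFReal 0 1 x = (√(2 * π))⁻¹ * rexp (-(1/2) * x ^ 2) := by
  simp only [gaussianPDFReal, NNReal.coe_one, mul_one, sub_zero]
  ring_nf

lemma stdGauss_eq :
    stdGauss = (volume : Measure ℝ).withDensity
      (fun x => ((gaussianPDFReal 0 1 x).toNNReal : ENNReal)) := by
  rw [stdGauss, gaussianReal_of_var_ne_zero _ one_ne_zero]
  rfl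

lemma integral_stdGauss (g : ℝ → ℝ) :
    ∫ t, g t ∂stdGauss = ∫ t, gaussianPDFReal 0 1 t * g t := by
  rw [stdGauss_eq,
    integral_withDensity_eq_integral_smul ((measurable_gaussianPDFReal 0 1).real_toNNReal) g]
  congr 1
  funext t
  simp [NNReal.smul_def, Real.coe_toNNReal _ (gaussianPDFReal_nonneg 0 1 t)]

lemma integrable_stdGauss_iff {g : ℝ → ℝ} :
    Integrable g stdGauss ↔ Integrable (fun x => g x * gaussianPDFReal 0 1 x) volume := by
  rw [stdGauss, gaussianReal_of_var_ne_zero _ one_ne_zero,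
    integrable_withDensity_iff (measurable_gaussianPDF 0 1)
      (ae_of_all _ fun x => ENNReal.ofReal_lt_top)]
  constructor <;> intro h <;>
    refine h.congr (ae_of_all _ fun x => ?_) <;>
    simp [gaussianPDF, ENNReal.toReal_ofReal (gaussianPDFReal_nonneg 0 1 x)]

lemma integrable_exp_half : Integrable (fun x : ℝ => rexp (-(1/2) * x ^ 2)) :=
  integrable_exp_neg_mul_sq (by norm_num)

lemma integrable_x_exp_half : Integrable (fun x : ℝ => x * rexp (-(1/2) * x ^ 2)) :=
  integrable_mul_exp_neg_mul_sq (by norm_num)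

lemma rpow_two_eq (x : ℝ) : x ^ (2:ℝ) = x ^ 2 := by
  rw [show (2:ℝ) = ((2:ℕ):ℝ) by norm_num, Real.rpow_natCast]

lemma integrable_x2_exp_half : Integrable (fun x : ℝ => x ^ 2 * rexp (-(1/2) * x ^ 2)) := by
  have h := integrable_rpow_mul_exp_neg_mul_sq (b := 1/2) (by norm_num) (s := 2) (by norm_num)
  exact h.congr (ae_of_all _ fun x => by simp only [rpow_two_eq])

lemma integrable_id_stdGauss : Integrable (fun t : ℝ => t) stdGauss := by
  rw [integrable_stdGauss_iff]
  refine (integrable_x_exp_half.const_mul (√(2 * π))⁻¹).congr (ae_of_all _ fun x => ?_)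
  simp only [phi_eq]; ring

lemma integrable_sq_stdGauss : Integrable (fun t : ℝ => t ^ 2) stdGauss := by
  rw [integrable_stdGauss_iff]
  refine (integrable_x2_exp_half.const_mul (√(2 * π))⁻¹).congr (ae_of_all _ fun x => ?_)
  simp only [phi_eq]; ring

lemma sqrt_two_pi_ne_zero : √(2 * π) ≠ 0 :=
  (Real.sqrt_pos.mpr (by positivity)).ne'

/-- Second moment of the standard Gaussian. -/
lemma integral_sq_stdGauss : ∫ t, t ^ 2 ∂stdGauss = 1 := by
  rw [integral_stdGauss]
  set c : ℝ := (√(2 * π))⁻¹ with hc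
  have hu : ∀ x : ℝ, HasDerivAt (fun y : ℝ => c * y) c x := fun x => by
    simpa using (hasDerivAt_id x).const_mul c
  have hv : ∀ x : ℝ, HasDerivAt (fun y : ℝ => -rexp (-(1/2) * y ^ 2))
      (x * rexp (-(1/2) * x ^ 2)) x := by
    intro x
    have h1 : HasDerivAt (fun y : ℝ => -(1/2) * y ^ 2) (-x) x := by
      have := (hasDerivAt_pow 2 x).const_mul (-(1/2) : ℝ)
      refine this.congr_deriv ?_
      push_cast
      ring
    have h2 := (h1.exp).neg
    refine h2.congr_deriv ?_
    ring
  have key := integral_mul_deriv_eq_deriv_mul_of_integrable (fun x _ => hu x) (fun x _ => hv x)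
    (huv' := by
      refine (integrable_x2_exp_half.const_mul c).congr (ae_of_all _ fun x => ?_)
      simp only [Pi.mul_apply, Pi.neg_apply]; ring)
    (hu'v := by
      refine ((integrable_exp_half.const_mul c).neg).congr (ae_of_all _ fun x => ?_)
      simp only [Pi.mul_apply, Pi.neg_apply]; ring)
    (huv := by
      refine ((integrable_x_exp_half.const_mul c).neg).congr (ae_of_all _ fun x => ?_)
      simp only [Pi.mul_apply, Pi.neg_apply]; ring)
  have hL : ∫ x : ℝ, gaussianPDFReal 0 1 x * x ^ 2
      = ∫ x : ℝ, (c * x) * (x * rexp (-(1/2) * x ^ 2)) := by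
    congr 1; funext x; simp only [phi_eq]; ring
  rw [hL, key]
  have : ∫ x : ℝ, c * -rexp (-(1/2) * x ^ 2) = -(c * √(π / (1/2))) := by
    calc ∫ x : ℝ, c * -rexp (-(1/2) * x ^ 2)
        = ∫ x : ℝ, -(c * rexp (-(1/2) * x ^ 2)) := by congr 1; funext x; ring
      _ = -∫ x : ℝ, c * rexp (-(1/2) * x ^ 2) := integral_neg _
      _ = -(c * ∫ x : ℝ, rexp (-(1/2) * x ^ 2)) := by rw [integral_const_mul]
      _ = -(c * √(π / (1/2))) := by rw [integral_gaussian]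
  rw [this, neg_neg, show π / (1/2) = 2 * π by ring, hc, inv_mul_cancel₀ sqrt_two_pi_ne_zero]

namespace Quantizer

variable {Q : ℕ} (q : Quantizer Q)

lemma cell_measurableSet (i : Fin Q) : MeasurableSet (q.cell i) := by
  have : q.cell i = (fun t : ℝ => (t : EReal)) ⁻¹' (Ico (q.τ i.castSucc) (q.τ i.succ)) := rfl
  rw [this]
  exact measurable_coe_real_ereal measurableSet_Ico

lemma cell_disjoint : Pairwise (Function.onFun Disjoint q.cell) := by
  intro i j hij
  wlog h : i < j generalizing i j
  · exact (this hij.symm ((hij.lt_or_gt).resolve_left h)).symm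
  refine Set.disjoint_left.mpr fun t hti htj => ?_
  have hle : i.succ ≤ j.castSucc := by
    rw [Fin.le_def]
    simp only [Fin.val_succ, Fin.coe_castSucc]
    exact h
  have h1 : q.τ i.succ ≤ q.τ j.castSucc := q.τ_mono.monotone hle
  exact absurd ((hti.2.trans_le h1).trans_le htj.1) (lt_irrefl _)

lemma cell_cover (t : ℝ) : ∃ i : Fin Q, t ∈ q.cell i := by
  classical
  set P : Finset (Fin (Q + 1)) := Finset.univ.filter (fun j => q.τ j ≤ (t : EReal)) with hP
  have h0 : (0 : Fin (Q + 1)) ∈ P := by simp [hP, q.τ_bot]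
  have hne : P.Nonempty := ⟨0, h0⟩
  set j := P.max' hne with hj_def
  have hj : q.τ j ≤ (t : EReal) := (Finset.mem_filter.mp (P.max'_mem hne)).2
  have hjlast : j ≠ Fin.last Q := by
    intro h
    rw [h, q.τ_top] at hj
    exact absurd (lt_of_lt_of_le (EReal.coe_lt_top t) hj) (lt_irrefl _)
  refine ⟨j.castPred hjlast, ?_, ?_⟩
  · rw [Fin.castSucc_castPred]; exact hj
  · by_contra h
    push_neg at h
    have hmem : (j.castPred hjlast).succ ∈ P := by simp [hP, h]
    have hle := P.le_max' _ hmem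
    rw [← hj_def] at hle
    have : j < (j.castPred hjlast).succ := by
      conv_lhs => rw [← Fin.castSucc_castPred j hjlast]
      exact Fin.castSucc_lt_succ
    exact absurd (lt_of_lt_of_le this hle) (lt_irrefl _)

lemma f_eq_sum : q.f = fun t => ∑ i, (q.cell i).indicator (fun _ => q.m i) t := by
  funext t
  obtain ⟨i, hti⟩ := q.cell_cover t
  rw [q.f_eq i t hti.1 hti.2]
  rw [Finset.sum_eq_single i]
  · rw [Set.indicator_of_mem hti]
  · intro j _ hj
    exact Set.indicator_of_notMem
      (fun htj => Set.disjoint_left.mp (q.cell_disjoint hj) htj hti) _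
  · intro h; exact absurd (Finset.mem_univ i) h

lemma f_measurable : Measurable q.f := by
  rw [q.f_eq_sum]
  exact Finset.measurable_sum _ fun i _ => measurable_const.indicator (q.cell_measurableSet i)

lemma f_bound (t : ℝ) : ‖q.f t‖ ≤ ∑ i, |q.m i| := by
  obtain ⟨i, hti⟩ := q.cell_cover t
  rw [q.f_eq i t hti.1 hti.2, Real.norm_eq_abs]
  exact Finset.single_le_sum (fun j _ => abs_nonneg (q.m j)) (Finset.mem_univ i)

lemma f_integrable : Integrable q.f stdGauss := by
  refine Integrable.mono' (integrable_const (∑ i, |q.m i|))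
    q.f_measurable.aestronglyMeasurable (ae_of_all _ fun t => q.f_bound t)

lemma f_mul_f_integrable : Integrable (fun t => q.f t * q.f t) stdGauss :=
  q.f_integrable.bdd_mul q.f_measurable.aestronglyMeasurable (ae_of_all _ q.f_bound)

lemma f_mul_id_integrable : Integrable (fun t => q.f t * t) stdGauss :=
  integrable_id_stdGauss.bdd_mul q.f_measurable.aestronglyMeasurable (ae_of_all _ q.f_bound)

lemma iUnion_cell : (⋃ i, q.cell i) = Set.univ :=
  Set.eq_univ_of_forall fun t => Set.mem_iUnion.mpr (q.cell_cover t)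

end Quantizer

end Aux

/-- Under Lloyd–Max stationarity, with `μ = E[f_Q(g) g]` and
`e_Q = E[(f_Q(g)-g)²]`, we have `σ² = E[(f_Q(g) - μ g)²] = μ - μ² = e_Q - e_Q²`. -/
theorem lloydMax_sigma_sq {Q : ℕ} (q : Quantizer Q)
    (hq : LloydMaxStationary q)
    (μ : ℝ) (hμ : μ = ∫ t, q.f t * t ∂stdGauss)
    (eQ : ℝ) (heQ : eQ = ∫ t, (q.f t - t) ^ 2 ∂stdGauss) :
    (∫ t, (q.f t - μ * t) ^ 2 ∂stdGauss) = μ - μ ^ 2 ∧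
    (∫ t, (q.f t - μ * t) ^ 2 ∂stdGauss) = eQ - eQ ^ 2 := by
  have hff := q.f_mul_f_integrable
  have hft := q.f_mul_id_integrable
  have ht2 := integrable_sq_stdGauss
  -- key: ∫ f (f - t) = 0
  have hg : Integrable (fun t => q.f t * q.f t - q.f t * t) stdGauss := hff.sub hft
  have hkey : ∫ t, (q.f t * q.f t - q.f t * t) ∂stdGauss = 0 := by
    rw [← setIntegral_univ, ← q.iUnion_cell,
      integral_iUnion_fintype q.cell_measurableSet q.cell_disjoint
        (fun i => hg.integrableOn)]
    refine Finset.sum_eq_zero fun i _ => ?_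
    have hcongr : Set.EqOn (fun t => q.f t * q.f t - q.f t * t)
        (fun t => q.m i * (q.m i - t)) (q.cell i) := by
      intro t ht
      simp only
      rw [q.f_eq i t ht.1 ht.2]
      ring
    rw [setIntegral_congr_fun (q.cell_measurableSet i) hcongr, integral_const_mul, hq i, mul_zero]
  have hS2 : ∫ t, q.f t * q.f t ∂stdGauss = μ := by
    rw [integral_sub hff hft] at hkey
    rw [hμ]; linarith
  -- value of σ²
  have hσ : ∫ t, (q.f t - μ * t) ^ 2 ∂stdGauss = μ - μ ^ 2 := by
    have expand : (fun t => (q.f t - μ * t) ^ 2)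
        = fun t => (q.f t * q.f t - (2 * μ) * (q.f t * t)) + μ ^ 2 * t ^ 2 := by
      funext t; ring
    have i1 : Integrable (fun t => q.f t * q.f t - 2 * μ * (q.f t * t)) stdGauss :=
      hff.sub (hft.const_mul _)
    have i2 : Integrable (fun t : ℝ => μ ^ 2 * t ^ 2) stdGauss := ht2.const_mul _
    have i3 : Integrable (fun t => 2 * μ * (q.f t * t)) stdGauss := hft.const_mul _
    rw [expand, integral_add i1 i2, integral_sub hff i3, integral_const_mul, integral_const_mul,
      hS2, ← hμ, integral_sq_stdGauss]
    ring
  have heQ' : eQ = 1 - μ := by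
    have expand : (fun t => (q.f t - t) ^ 2)
        = fun t => (q.f t * q.f t - 2 * (q.f t * t)) + t ^ 2 := by
      funext t; ring
    have i1 : Integrable (fun t => q.f t * q.f t - 2 * (q.f t * t)) stdGauss :=
      hff.sub (hft.const_mul _)
    have i3 : Integrable (fun t => 2 * (q.f t * t)) stdGauss := hft.const_mul _
    rw [heQ, expand, integral_add i1 ht2, integral_sub hff i3, integral_const_mul,
      hS2, ← hμ, integral_sq_stdGauss]
    ring
  exact ⟨hσ, by rw [hσ, heQ']; ring⟩
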